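/- In every execution of the online collaborative caching algorithm on a request sequence v_1, …, v_n (n ≥ 1), and for every nonempty finite set W* ⊆ X containing the root r, the total credit satisfies Σ_{j=1}^n ĉ(v_j) ≤ (log₂(n) + 1) · Σ_{w∈W*} f_w + (2·log₂(n) + 1) · Σ_{j=1}^n d(W*, v_j), where for each request v the credit ĉ(v) equals f_w − p(w) + d(w,v) if v caused the content to be cached at a new node w (with p the potentials just before v arrived), and ĉ(v) = d(W_v, v) otherwise, W_v being the cache set when v was processed. -/

import Mathlib

open Finset

/-- The setting of the online collaborative caching problem: a finite set `X` of nodes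
(base stations together with the root `r` representing the Internet), a pseudometric
UA-cost `d` satisfying the triangle inequality, and nonnegative caching costs `f`
with `f r = 0` (the root always holds the content). -/
structure CachingSetting (X : Type*) [Fintype X] where
  d : X → X → ℝ
  f : X → ℝ
  r : X
  d_nonneg : ∀ x y, 0 ≤ d x y
  d_self : ∀ x, d x x = 0
  d_symm : ∀ x y, d x y = d y x
  d_triangle : ∀ x y z, d x z ≤ d x y + d y z
  f_nonneg : ∀ k, 0 ≤ f k
  f_root : f r = 0

namespace CachingSetting

variable {X : Type*} [Fintype X] [DecidableEq X] (S : CachingSetting X)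

/-- UA cost of serving a request at `v` from the nearest node of the cache set `W`:
`D W v = min_{k ∈ W} d k v`. -/
noncomputable def D (W : Finset X) (v : X) : ℝ :=
  if h : W.Nonempty then W.inf' h (fun k => S.d k v) else 0

/-- Potential of node `k` with respect to the cache set `W` and the first `j`
requests of the request sequence `v`:
`pot v W j k = ∑_{i < j} max(D W (v i) − d k (v i), 0)`. -/
noncomputable def pot (v : ℕ → X) (W : Finset X) (j : ℕ) (k : X) : ℝ :=
  ∑ i ∈ Finset.range j, max (S.D W (v i) - S.d k (v i)) 0

/-- One step of the online algorithm on request `v i`, turning the cache set `W`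
into `W'`.  After updating the potentials (they become the potentials with respect
to `W` and the first `i + 1` requests), either all potentials are at most the caching
costs and no new cache is opened, or the content is cached at a maximizer `w` of
`p(k) − f k` with `p(w) − f w > 0`. -/
def Step (v : ℕ → X) (i : ℕ) (W W' : Finset X) : Prop :=
  ((∀ k, S.pot v W (i + 1) k ≤ S.f k) ∧ W' = W) ∨
    (∃ w, (∀ k, S.pot v W (i + 1) k - S.f k ≤ S.pot v W (i + 1) w - S.f w) ∧
      S.f w < S.pot v W (i + 1) w ∧ W' = insert w W)

/-- `IsExecution S n v Ws` says that `Ws j` is the cache set maintained by the online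
algorithm after fully processing the first `j` of the `n` requests `v 0, v 1, …`
(initially the cache set is `{r}`); ties may be broken arbitrarily. -/
def IsExecution (n : ℕ) (v : ℕ → X) (Ws : ℕ → Finset X) : Prop :=
  Ws 0 = {S.r} ∧ ∀ i < n, S.Step v i (Ws i) (Ws (i + 1))

/-- One step of the online algorithm on request `v i`, together with the credit `c`
assigned to the request: `c = f w − p(w) + d(w, v i)` if the request causes the
content to be cached at a new node `w` (with `p` the potentials just before the
request arrived), and `c = d(W, v i)` otherwise (`W` then being the cache set when
the request is processed). -/
def StepWithCredit (v : ℕ → X) (i : ℕ) (W W' : Finset X) (c : ℝ) : Prop :=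
  ((∀ k, S.pot v W (i + 1) k ≤ S.f k) ∧ W' = W ∧ c = S.D W (v i)) ∨
    (∃ w, (∀ k, S.pot v W (i + 1) k - S.f k ≤ S.pot v W (i + 1) w - S.f w) ∧
      S.f w < S.pot v W (i + 1) w ∧ W' = insert w W ∧
      c = S.f w - S.pot v W i w + S.d w (v i))

/-- `IsExecutionWithCredits S n v Ws c` says that `Ws j` is the cache set maintained
by the online algorithm after fully processing the first `j` of the `n` requests
`v 0, v 1, …` (initially `{r}`), and `c i` is the credit of request `v i`; ties may
be broken arbitrarily. -/
def IsExecutionWithCredits (n : ℕ) (v : ℕ → X) (Ws : ℕ → Finset X) (c : ℕ → ℝ) : Prop :=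
  Ws 0 = {S.r} ∧ ∀ i < n, S.StepWithCredit v i (Ws i) (Ws (i + 1)) (c i)

end CachingSetting

set_option linter.unusedSectionVars false
namespace CachingSetting

variable {X : Type*} [Fintype X] [DecidableEq X] (S : CachingSetting X)

lemma D_nonneg (W : Finset X) (x : X) : 0 ≤ S.D W x := by
  unfold D
  split
  · exact Finset.le_inf' _ _ fun k _ => S.d_nonneg k x
  · exact le_refl 0

lemma D_le_of_mem {W : Finset X} {k : X} (h : k ∈ W) (x : X) : S.D W x ≤ S.d k x := by
  unfold D
  rw [dif_pos ⟨k, h⟩]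
  exact Finset.inf'_le _ h

lemma exists_D_eq {W : Finset X} (h : W.Nonempty) (x : X) :
    ∃ k ∈ W, S.D W x = S.d k x := by
  unfold D
  rw [dif_pos h]
  exact Finset.exists_mem_eq_inf' h _

lemma D_mono {W W' : Finset X} (h : W ⊆ W') (hW : W.Nonempty) (x : X) :
    S.D W' x ≤ S.D W x := by
  obtain ⟨k, hk, he⟩ := S.exists_D_eq hW x
  rw [he]
  exact S.D_le_of_mem (h hk) x

lemma D_dist {W : Finset X} (hW : W.Nonempty) (y x : X) :
    S.D W x ≤ S.D W y + S.d y x := by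
  obtain ⟨k, hk, he⟩ := S.exists_D_eq hW y
  rw [he]
  exact le_trans (S.D_le_of_mem hk x) (S.d_triangle k y x)

lemma pot_nonneg (v : ℕ → X) (W : Finset X) (j : ℕ) (k : X) : 0 ≤ S.pot v W j k :=
  Finset.sum_nonneg fun _ _ => le_max_right _ _

lemma pot_succ (v : ℕ → X) (W : Finset X) (j : ℕ) (k : X) :
    S.pot v W (j + 1) k = S.pot v W j k + max (S.D W (v j) - S.d k (v j)) 0 :=
  Finset.sum_range_succ _ _

variable {n : ℕ} {v : ℕ → X} {Ws : ℕ → Finset X} {cr : ℕ → ℝ}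

lemma root_mem (hexec : S.IsExecutionWithCredits n v Ws cr) :
    ∀ i, i ≤ n → S.r ∈ Ws i := by
  intro i
  induction i with
  | zero => intro _; rw [hexec.1]; exact Finset.mem_singleton_self _
  | succ i ih =>
    intro h
    have h1 : i < n := by omega
    have hm := ih (by omega)
    rcases hexec.2 i h1 with ⟨_, hW, _⟩ | ⟨w, _, _, hW, _⟩
    · rw [hW]; exact hm
    · rw [hW]; exact Finset.mem_insert_of_mem hm

lemma ws_nonempty (hexec : S.IsExecutionWithCredits n v Ws cr) {i : ℕ} (h : i ≤ n) :
    (Ws i).Nonempty := ⟨S.r, S.root_mem hexec i h⟩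

lemma invariant (hexec : S.IsExecutionWithCredits n v Ws cr) :
    ∀ i, i ≤ n → ∀ k, S.pot v (Ws i) i k ≤ S.f k := by
  intro i
  induction i with
  | zero => intro _ k; simp [pot, S.f_nonneg k]
  | succ i ih =>
    intro hin k
    have hi : i < n := by omega
    have IH := ih (by omega)
    have hne : (Ws i).Nonempty := S.ws_nonempty hexec (by omega)
    rcases hexec.2 i hi with ⟨h1, hW, _⟩ | ⟨w, hmax, htrig, hW, _⟩
    · rw [hW]; exact h1 k
    · rw [hW]
      set W := Ws i with hWdef
      have hbδ : S.d w (v i) < S.D W (v i) := by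
        by_contra hle
        push_neg at hle
        have hz : max (S.D W (v i) - S.d w (v i)) 0 = 0 := max_eq_right (by linarith)
        have := S.pot_succ v W i w
        rw [hz] at this
        have := IH w
        linarith [htrig, this]
      have key1 : ∀ j : ℕ, S.D (insert w W) (v j) ≤ S.D W (v j) :=
        fun j => S.D_mono (Finset.subset_insert _ _) hne (v j)
      have key2 : S.D (insert w W) (v i) ≤ S.d w (v i) :=
        S.D_le_of_mem (Finset.mem_insert_self _ _) (v i)
      have hsum : S.pot v (insert w W) (i + 1) k ≤
          S.pot v W i k + max (S.d w (v i) - S.d k (v i)) 0 := by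
        rw [S.pot_succ, pot]
        refine add_le_add (Finset.sum_le_sum fun j _ => ?_) ?_
        · exact max_le_max (by linarith [key1 j]) le_rfl
        · exact max_le_max (by linarith [key2]) le_rfl
      rcases le_or_gt (S.d w (v i)) (S.d k (v i)) with hxa | hxb
      · have hz : max (S.d w (v i) - S.d k (v i)) 0 = 0 := max_eq_right (by linarith)
        rw [hz] at hsum
        linarith [IH k]
      · have hxδ : S.d k (v i) < S.D W (v i) := lt_trans hxb hbδ
        have e1 : S.pot v W (i + 1) k = S.pot v W i k + (S.D W (v i) - S.d k (v i)) := by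
          rw [S.pot_succ, max_eq_left (by linarith)]
        have e2 : S.pot v W (i + 1) w = S.pot v W i w + (S.D W (v i) - S.d w (v i)) := by
          rw [S.pot_succ, max_eq_left (by linarith)]
        have h3 := hmax k
        have h4 := IH w
        have h5 : max (S.d w (v i) - S.d k (v i)) 0 = S.d w (v i) - S.d k (v i) :=
          max_eq_left (by linarith)
        rw [h5] at hsum
        linarith [hsum, e1, e2, h3, h4]



lemma per_demand (hexec : S.IsExecutionWithCredits n v Ws cr) {i : ℕ} (hi : i < n)
    (y : X) (T : Finset ℕ) (hT : T ⊆ Finset.range i) :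
    cr i ≤ S.d y (v i) +
      (S.f y + 2 * ∑ l ∈ T, S.d y (v l)) / ((T.card : ℝ) + 1) := by
  have hne : (Ws i).Nonempty := S.ws_nonempty hexec (le_of_lt hi)
  set W := Ws i with hWdef
  set δ := S.D W (v i) with hδ
  set dc := S.d y (v i) with hdc
  set t : ℝ := δ - dc with ht
  set Sd := ∑ l ∈ T, S.d y (v l) with hSd
  set j : ℝ := (T.card : ℝ) + 1 with hj
  set B : ℝ := S.f y + 2 * Sd with hB
  have hj1 : (1:ℝ) ≤ j := by
    rw [hj]; have : (0:ℝ) ≤ (T.card : ℝ) := Nat.cast_nonneg _; linarith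
  have hj0 : (0:ℝ) < j := by linarith
  -- potential lower bound at y
  have hpc : j * t - 2 * Sd ≤ S.pot v W (i + 1) y := by
    have hnotmem : i ∉ T := fun h => absurd (hT h) (by simp)
    have hsub : insert i T ⊆ Finset.range (i + 1) := by
      intro l hl
      rcases Finset.mem_insert.mp hl with h | h
      · simp [h]
      · have := hT h; simp only [Finset.mem_range] at this ⊢; omega
    have hsum : ∑ l ∈ insert i T, max (S.D W (v l) - S.d y (v l)) 0 ≤ S.pot v W (i + 1) y :=
      Finset.sum_le_sum_of_subset_of_nonneg hsub (fun _ _ _ => le_max_right _ _)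
    rw [Finset.sum_insert hnotmem] at hsum
    have hDc : t ≤ S.D W y := by
      have := S.D_dist hne y (v i)
      rw [ht, hδ, hdc]; linarith
    have hterm : ∀ l ∈ T, t - 2 * S.d y (v l) ≤ max (S.D W (v l) - S.d y (v l)) 0 := by
      intro l _
      have h2 : S.D W y ≤ S.D W (v l) + S.d (v l) y := S.D_dist hne (v l) y
      rw [S.d_symm (v l) y] at h2
      have : t - 2 * S.d y (v l) ≤ S.D W (v l) - S.d y (v l) := by linarith
      exact le_trans this (le_max_left _ _)
    have hsum2 : ∑ l ∈ T, (t - 2 * S.d y (v l)) ≤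
        ∑ l ∈ T, max (S.D W (v l) - S.d y (v l)) 0 := Finset.sum_le_sum hterm
    have heq : ∑ l ∈ T, (t - 2 * S.d y (v l)) = (T.card : ℝ) * t - 2 * Sd := by
      rw [Finset.sum_sub_distrib, Finset.sum_const, nsmul_eq_mul, ← Finset.mul_sum, hSd]
    have hti : t ≤ max (δ - dc) 0 := le_trans (le_of_eq ht) (le_max_left _ _)
    rw [heq] at hsum2
    have : j * t - 2 * Sd = t + ((T.card : ℝ) * t - 2 * Sd) := by rw [hj]; ring
    linarith
  rcases hexec.2 i hi with ⟨h1, _, hc⟩ | ⟨w, hmax, htrig, _, hc⟩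
  · -- no cache opened
    have hfc := h1 y
    have hcδ : cr i = δ := hc
    have htB : t ≤ B / j := by
      rw [le_div_iff₀ hj0, hB]
      nlinarith [hpc, hfc]
    rw [hcδ]
    have : δ = dc + t := by rw [ht]; ring
    rw [this, hB]
    linarith
  · -- cache opened at w
    have hIw : S.pot v W i w ≤ S.f w := S.invariant hexec i (le_of_lt hi) w
    have hbδ : S.d w (v i) < δ := by
      by_contra hle
      push_neg at hle
      have hz : max (S.D W (v i) - S.d w (v i)) 0 = 0 := max_eq_right (by rw [← hδ]; linarith)
      have hps := S.pot_succ v W i w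
      rw [hz] at hps
      linarith [htrig, hps, hIw]
    have e2 : S.pot v W (i + 1) w = S.pot v W i w + (δ - S.d w (v i)) := by
      rw [S.pot_succ, max_eq_left (by rw [← hδ]; linarith)]
    have hcδ : cr i ≤ δ := by rw [hc]; linarith [htrig, e2]
    have hc2 : cr i ≤ S.f y - S.pot v W (i + 1) y + δ := by
      rw [hc]
      have := hmax y
      linarith [e2]
    rcases le_or_gt t (B / j) with h | h
    · have : δ = dc + t := by rw [ht]; ring
      rw [hB] at h
      linarith [hcδ]
    · have hq : (j - 1) * (B / j) ≤ (j - 1) * t :=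
        mul_le_mul_of_nonneg_left (le_of_lt h) (by linarith)
      have hexp : (j - 1) * (B / j) = j * (B / j) - B / j := by ring
      have hjB : j * (B / j) = B := mul_div_cancel₀ _ (ne_of_gt hj0)
      have hgoal : cr i ≤ B - (j - 1) * t + dc := by
        have : j * t - 2 * Sd ≤ S.pot v W (i + 1) y := hpc
        have hδt : δ = dc + t := by rw [ht]; ring
        rw [hB]
        linarith [hc2]
      rw [hB] at hq hexp hjB hgoal ⊢
      calc cr i ≤ S.f y + 2 * Sd - (j - 1) * t + dc := hgoal
        _ ≤ S.f y + 2 * Sd - (j - 1) * ((S.f y + 2 * Sd) / j) + dc := by linarith [hq]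
        _ = dc + (S.f y + 2 * Sd) / j := by field_simp; ring
end CachingSetting

section RankHarmonic

private lemma rank_strict (A : Finset ℕ) {a b : ℕ} (ha : a ∈ A) (hab : a < b) :
    (A.filter (· < a)).card < (A.filter (· < b)).card := by
  have hsub : A.filter (· < a) ⊆ A.filter (· < b) := by
    intro x hx
    simp only [Finset.mem_filter] at hx ⊢
    exact ⟨hx.1, by omega⟩
  refine Finset.card_lt_card ((Finset.ssubset_iff_of_subset hsub).2 ⟨a, ?_, ?_⟩)
  · simp only [Finset.mem_filter]; exact ⟨ha, hab⟩
  · simp only [Finset.mem_filter]; omega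

private lemma rank_injOn (A : Finset ℕ) : ∀ a ∈ A, ∀ b ∈ A,
    (A.filter (· < a)).card = (A.filter (· < b)).card → a = b := by
  intro a ha b hb h
  rcases Nat.lt_trichotomy a b with hl | he | hl
  · exact absurd h (Nat.ne_of_lt (rank_strict A ha hl))
  · exact he
  · exact absurd h.symm (Nat.ne_of_lt (rank_strict A hb hl))

private lemma rank_lt_card (A : Finset ℕ) {i : ℕ} (hi : i ∈ A) :
    (A.filter (· < i)).card < A.card := by
  have hsub : A.filter (· < i) ⊆ A.erase i := by
    intro x hx
    simp only [Finset.mem_filter] at hx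
    exact Finset.mem_erase.2 ⟨by omega, hx.1⟩
  calc (A.filter (· < i)).card ≤ (A.erase i).card := Finset.card_le_card hsub
    _ < A.card := Finset.card_erase_lt_of_mem hi

private lemma sum_rank_le (A B : Finset ℕ) (hBA : B ⊆ A) (g : ℕ → ℝ) (hg : ∀ j, 0 ≤ g j)
    (s : ℕ) (hs : ∀ i ∈ B, s ≤ (A.filter (· < i)).card) :
    ∑ i ∈ B, g ((A.filter (· < i)).card) ≤ ∑ j ∈ Finset.Ico s A.card, g j := by
  rw [← Finset.sum_image (fun a ha b hb h => rank_injOn A a (hBA ha) b (hBA hb) h)]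
  refine Finset.sum_le_sum_of_subset_of_nonneg ?_ (fun j _ _ => hg j)
  intro j hj
  rw [Finset.mem_image] at hj
  obtain ⟨i, hiB, rfl⟩ := hj
  exact Finset.mem_Ico.2 ⟨hs i hiB, rank_lt_card A (hBA hiB)⟩

private lemma harmonic_Ico (m : ℕ) :
    ∑ j ∈ Finset.Ico 1 m, (1:ℝ)/(j+1) ≤ Real.log m := by
  induction m with
  | zero => simp
  | succ m ih =>
    rcases Nat.eq_zero_or_pos m with rfl | hm
    · simp
    · rw [Finset.sum_Ico_succ_top hm]
      have hm0 : (0:ℝ) < (m:ℝ) := by exact_mod_cast hm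
      have h1 : Real.log ((m:ℝ)/((m:ℝ)+1)) ≤ (m:ℝ)/((m:ℝ)+1) - 1 :=
        Real.log_le_sub_one_of_pos (by positivity)
      rw [Real.log_div (by positivity) (by positivity)] at h1
      have h2 : (m:ℝ)/((m:ℝ)+1) - 1 = -(1/((m:ℝ)+1)) := by field_simp; ring
      rw [h2] at h1
      push_cast
      push_cast at ih
      linarith

private lemma harmonic_range (m : ℕ) :
    ∑ j ∈ Finset.range m, (1:ℝ)/(j+1) ≤ Real.log m + 1 := by
  rcases Nat.eq_zero_or_pos m with rfl | hm
  · simp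
  · have he : Finset.range m = insert 0 (Finset.Ico 1 m) := by
      ext x
      simp only [Finset.mem_range, Finset.mem_insert, Finset.mem_Ico]
      omega
    rw [he, Finset.sum_insert (by simp)]
    have := harmonic_Ico m
    have hlog : 0 ≤ Real.log m := Real.log_natCast_nonneg m
    simp only [Nat.cast_zero, zero_add, one_div_one]
    linarith

private lemma log_le_logb {m n : ℕ} (hmn : m ≤ n) (hn : 1 ≤ n) :
    Real.log m ≤ Real.logb 2 n := by
  have h1 : Real.log m ≤ Real.log n := by
    rcases Nat.eq_zero_or_pos m with rfl | hm
    · simpa using Real.log_natCast_nonneg n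
    · exact Real.log_le_log (by exact_mod_cast hm) (by exact_mod_cast hmn)
  have hlogn : 0 ≤ Real.log n := Real.log_natCast_nonneg n
  have l2pos : 0 < Real.log 2 := Real.log_pos one_lt_two
  have l2le : Real.log 2 ≤ 1 := by
    have := Real.log_le_sub_one_of_pos (by norm_num : (0:ℝ) < 2)
    linarith
  have h2 : Real.log n ≤ Real.logb 2 n := by
    rw [Real.logb, le_div_iff₀ l2pos]
    exact mul_le_of_le_one_right hlogn l2le
  linarith

end RankHarmonic

set_option maxHeartbeats 1000000 in
/-- Lemma 5 of the paper: in every execution of the online algorithm on requests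
`v 0, …, v (n-1)` (`n ≥ 1`) with credits `c`, and for every offline cache set `W*`
containing the root, the total credit satisfies
`∑_j ĉ(v_j) ≤ (log₂ n + 1) · ∑_{w ∈ W*} f w + (2 log₂ n + 1) · ∑_j d(W*, v_j)`. -/
theorem caching_credit_bound {X : Type*} [Fintype X] [DecidableEq X]
    (S : CachingSetting X) (n : ℕ) (hn : 1 ≤ n) (v : ℕ → X) (Ws : ℕ → Finset X)
    (c : ℕ → ℝ) (hexec : S.IsExecutionWithCredits n v Ws c)
    (Wstar : Finset X) (hr : S.r ∈ Wstar) :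
    ∑ i ∈ Finset.range n, c i ≤
      (Real.logb 2 (n : ℝ) + 1) * ∑ w ∈ Wstar, S.f w +
        (2 * Real.logb 2 (n : ℝ) + 1) * ∑ j ∈ Finset.range n, S.D Wstar (v j) := by
  classical
  have hWsne : Wstar.Nonempty := ⟨S.r, hr⟩
  have hφex : ∀ i : ℕ, ∃ y, y ∈ Wstar ∧ S.d y (v i) = S.D Wstar (v i) := by
    intro i
    obtain ⟨k, hk, he⟩ := S.exists_D_eq hWsne (v i)
    exact ⟨k, hk, he.symm⟩
  choose φ hφmem hφd using hφex
  set L := Real.logb 2 (n : ℝ) with hL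
  have hL0 : 0 ≤ L := Real.logb_nonneg one_lt_two (by exact_mod_cast hn)
  set A : X → Finset ℕ := fun w => (Finset.range n).filter (fun l => φ l = w) with hA
  set T : ℕ → Finset ℕ := fun i => ((A (φ i)).filter (fun l => l < i)) with hT
  set J : ℕ → ℝ := fun i => ((T i).card : ℝ) + 1 with hJ
  have hcardA : ∀ w, (A w).card ≤ n := by
    intro w
    rw [hA]
    calc ((Finset.range n).filter (fun l => φ l = w)).card
        ≤ (Finset.range n).card := Finset.card_le_card (Finset.filter_subset _ _)
      _ = n := Finset.card_range n
  have hTA : ∀ i, T i = (A (φ i)).filter (fun l => l < i) := fun i => rfl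
  have hJT : ∀ i, J i = ((T i).card : ℝ) + 1 := fun i => rfl
  have hJpos : ∀ i, 0 < J i := by
    intro i
    rw [hJT]
    have : (0:ℝ) ≤ ((T i).card : ℝ) := Nat.cast_nonneg _
    linarith
  -- per-request bound
  have hper : ∀ i ∈ Finset.range n, c i ≤ S.D Wstar (v i) +
      (S.f (φ i) / J i + 2 * ((∑ l ∈ T i, S.D Wstar (v l)) / J i)) := by
    intro i hi
    rw [Finset.mem_range] at hi
    have hTsub : T i ⊆ Finset.range i := by
      intro l hl
      rw [hTA i] at hl
      simp only [hA, Finset.mem_filter, Finset.mem_range] at hl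
      exact Finset.mem_range.2 hl.2
    have hpd := S.per_demand hexec hi (φ i) (T i) hTsub
    rw [hφd i] at hpd
    have hsum : ∑ l ∈ T i, S.d (φ i) (v l) = ∑ l ∈ T i, S.D Wstar (v l) := by
      refine Finset.sum_congr rfl (fun l hl => ?_)
      rw [hTA i] at hl
      simp only [hA, Finset.mem_filter, Finset.mem_range] at hl
      rw [← hl.1.2, hφd l]
    rw [hsum] at hpd
    have hre : (S.f (φ i) + 2 * ∑ l ∈ T i, S.D Wstar (v l)) / ((T i).card + 1) =
        S.f (φ i) / J i + 2 * ((∑ l ∈ T i, S.D Wstar (v l)) / J i) := by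
      rw [hJT, add_div, mul_div_assoc]
    rw [hre] at hpd
    exact hpd
  have hstep1 : ∑ i ∈ Finset.range n, c i ≤
      ∑ i ∈ Finset.range n, S.D Wstar (v i) +
      (∑ i ∈ Finset.range n, S.f (φ i) / J i +
       2 * ∑ i ∈ Finset.range n, ((∑ l ∈ T i, S.D Wstar (v l)) / J i)) := by
    calc ∑ i ∈ Finset.range n, c i
        ≤ ∑ i ∈ Finset.range n, (S.D Wstar (v i) +
            (S.f (φ i) / J i + 2 * ((∑ l ∈ T i, S.D Wstar (v l)) / J i))) :=
          Finset.sum_le_sum hper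
      _ = _ := by
          rw [Finset.sum_add_distrib, Finset.sum_add_distrib, ← Finset.mul_sum]
  -- Part A
  have hpartA : ∑ i ∈ Finset.range n, S.f (φ i) / J i ≤ (L + 1) * ∑ w ∈ Wstar, S.f w := by
    rw [← Finset.sum_fiberwise_of_maps_to (fun i _ => hφmem i) (fun i => S.f (φ i) / J i)]
    have hbnd : ∀ w ∈ Wstar,
        ∑ i ∈ (Finset.range n).filter (fun l => φ l = w), S.f (φ i) / J i ≤
          (L + 1) * S.f w := by
      intro w hw
      have hAw : (Finset.range n).filter (fun l => φ l = w) = A w := by rw [hA]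
      rw [hAw]
      have hre : ∀ i ∈ A w, S.f (φ i) / J i =
          S.f w * (fun jj => (1:ℝ)/((jj : ℝ)+1)) (((A w).filter (· < i)).card) := by
        intro i hi
        have hφi : φ i = w := by
          simp only [hA, Finset.mem_filter] at hi
          exact hi.2
        have hTi : T i = (A w).filter (· < i) := by rw [hTA i, hφi]
        rw [hφi, hJT, hTi]
        simp only []
        rw [div_eq_mul_one_div]
      rw [Finset.sum_congr rfl hre, ← Finset.mul_sum]
      have hrank := sum_rank_le (A w) (A w) (le_refl _) (fun jj => (1:ℝ)/((jj : ℝ)+1))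
        (fun jj => by positivity) 0 (fun i _ => Nat.zero_le _)
      have hico : Finset.Ico 0 (A w).card = Finset.range (A w).card := by
        rw [Finset.range_eq_Ico]
      rw [hico] at hrank
      have hharm := harmonic_range (A w).card
      have hlog := log_le_logb (hcardA w) hn
      have hfin : ∑ i ∈ A w, (fun jj => (1:ℝ)/((jj : ℝ)+1)) (((A w).filter (· < i)).card)
          ≤ L + 1 := by
        refine le_trans hrank (le_trans hharm ?_)
        rw [hL]
        linarith
      calc S.f w * ∑ i ∈ A w, (fun jj => (1:ℝ)/((jj : ℝ)+1)) (((A w).filter (· < i)).card)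
          ≤ S.f w * (L + 1) := mul_le_mul_of_nonneg_left hfin (S.f_nonneg w)
        _ = (L + 1) * S.f w := mul_comm _ _
    calc ∑ w ∈ Wstar, ∑ i ∈ (Finset.range n).filter (fun l => φ l = w), S.f (φ i) / J i
        ≤ ∑ w ∈ Wstar, (L + 1) * S.f w := Finset.sum_le_sum hbnd
      _ = (L + 1) * ∑ w ∈ Wstar, S.f w := by rw [Finset.mul_sum]
  -- Part B
  have hpartB : ∑ i ∈ Finset.range n, ((∑ l ∈ T i, S.D Wstar (v l)) / J i) ≤
      L * ∑ l ∈ Finset.range n, S.D Wstar (v l) := by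
    have hrw : ∀ i, (∑ l ∈ T i, S.D Wstar (v l)) / J i =
        ∑ l ∈ Finset.range n, (if φ l = φ i ∧ l < i then S.D Wstar (v l) / J i else 0) := by
      intro i
      rw [Finset.sum_div, hTA i, hA]
      simp only []
      rw [Finset.filter_filter]
      rw [Finset.sum_filter]
    calc ∑ i ∈ Finset.range n, ((∑ l ∈ T i, S.D Wstar (v l)) / J i)
        = ∑ i ∈ Finset.range n, ∑ l ∈ Finset.range n,
            (if φ l = φ i ∧ l < i then S.D Wstar (v l) / J i else 0) :=
          Finset.sum_congr rfl (fun i _ => hrw i)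
      _ = ∑ l ∈ Finset.range n, ∑ i ∈ Finset.range n,
            (if φ l = φ i ∧ l < i then S.D Wstar (v l) / J i else 0) := Finset.sum_comm
      _ ≤ ∑ l ∈ Finset.range n, L * S.D Wstar (v l) := ?_
      _ = L * ∑ l ∈ Finset.range n, S.D Wstar (v l) := by rw [Finset.mul_sum]
    refine Finset.sum_le_sum (fun l hl => ?_)
    rw [← Finset.sum_filter]
    have hset : (Finset.range n).filter (fun i => φ l = φ i ∧ l < i) =
        (A (φ l)).filter (fun i => l < i) := by
      rw [hA]
      rw [Finset.filter_filter]
      refine Finset.filter_congr (fun i hi => ?_)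
      constructor
      · rintro ⟨h1, h2⟩; exact ⟨h1.symm, h2⟩
      · rintro ⟨h1, h2⟩; exact ⟨h1.symm, h2⟩
    rw [hset]
    have hlA : l ∈ A (φ l) := by
      exact Finset.mem_filter.2 ⟨hl, rfl⟩
    have hre : ∀ i ∈ (A (φ l)).filter (fun i => l < i),
        S.D Wstar (v l) / J i = S.D Wstar (v l) *
          (fun jj => (1:ℝ)/((jj : ℝ)+1)) (((A (φ l)).filter (· < i)).card) := by
      intro i hi
      simp only [hA, Finset.mem_filter, Finset.mem_range] at hi
      have hφi : φ i = φ l := hi.1.2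
      have hTi : T i = (A (φ l)).filter (· < i) := by rw [hTA i, hφi]
      rw [hJT, hTi]
      simp only []
      rw [div_eq_mul_one_div]
    rw [Finset.sum_congr rfl hre, ← Finset.mul_sum]
    have hrank := sum_rank_le (A (φ l)) ((A (φ l)).filter (fun i => l < i))
      (Finset.filter_subset _ _) (fun jj => (1:ℝ)/((jj : ℝ)+1))
      (fun jj => by positivity) 1 ?_
    swap
    · intro i hi
      rw [Finset.mem_filter] at hi
      have : l ∈ (A (φ l)).filter (· < i) := by
        rw [Finset.mem_filter]
        exact ⟨hlA, hi.2⟩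
      have := Finset.card_pos.2 ⟨l, this⟩
      omega
    have hharm2 : ∑ jj ∈ Finset.Ico 1 (A (φ l)).card, (1:ℝ)/((jj : ℝ)+1) ≤ L := by
      refine le_trans (harmonic_Ico _) ?_
      rw [hL]
      exact log_le_logb (hcardA _) hn
    have hfin : ∑ i ∈ (A (φ l)).filter (fun i => l < i),
        (fun jj => (1:ℝ)/((jj : ℝ)+1)) (((A (φ l)).filter (· < i)).card) ≤ L :=
      le_trans hrank hharm2
    calc S.D Wstar (v l) * ∑ i ∈ (A (φ l)).filter (fun i => l < i),
          (fun jj => (1:ℝ)/((jj : ℝ)+1)) (((A (φ l)).filter (· < i)).card)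
        ≤ S.D Wstar (v l) * L := mul_le_mul_of_nonneg_left hfin (S.D_nonneg Wstar (v l))
      _ = L * S.D Wstar (v l) := mul_comm _ _
  -- combine
  have hF0 : 0 ≤ ∑ w ∈ Wstar, S.f w := Finset.sum_nonneg (fun w _ => S.f_nonneg w)
  have hD0 : 0 ≤ ∑ jj ∈ Finset.range n, S.D Wstar (v jj) :=
    Finset.sum_nonneg (fun jj _ => S.D_nonneg Wstar (v jj))
  linarith [hstep1, hpartA, hpartB]
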